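/- Let S ⊂ ℝⁿ be compact, let f : ℝⁿ → ℝ and c : ℝⁿ → ℝᵐ be continuously differentiable with g(x) = ∇f(x) and A(x) = ∇c(x) continuous, and suppose there is λ > 0 with σ_min(A(x)) ≥ λ for all x ∈ S. For x ∈ S let K(x) be the (n+m)×(n+m) block matrix [[I, A(x)], [A(x)ᵀ, 0]], let (g_σ(x), y_σ(x)) be the exact solution of K(x)(g_σ, y_σ) = (g(x), σc(x)), and define φ_σ(x) = f(x) − c(x)ᵀ y_σ(x). Then there exists M > 0 such that for all x ∈ S, all η₁, η₃ > 0, and all (g̃, ỹ) ∈ ℝⁿ × ℝᵐ satisfying ‖K(x)(g̃, ỹ) − (g(x), σc(x))‖ ≤ min{1, ‖c(x)‖⁻¹} · min{η₁, η₃}, the inexact values φ̃ = f(x) − c(x)ᵀỹ and g̃ satisfy |φ_σ(x) − φ̃| ≤ M η₁ and ‖g_σ(x) − g̃‖ ≤ M η₃. -/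

import Mathlib

open Matrix

/-- The Euclidean norm of a finitely-indexed real vector. -/
noncomputable def enormI {ι : Type*} [Fintype ι] (v : ι → ℝ) : ℝ :=
  Real.sqrt (∑ i, v i ^ 2)

lemma enormI_eq_norm {ι : Type*} [Fintype ι] (v : ι → ℝ) :
    enormI v = ‖((WithLp.equiv 2 (ι → ℝ)).symm v : EuclideanSpace ℝ ι)‖ := by
  rw [EuclideanSpace.norm_eq, enormI]
  congr 1
  exact Finset.sum_congr rfl fun i _ => by simp [Real.norm_eq_abs, sq_abs]

lemma enormI_nonneg {ι : Type*} [Fintype ι] (v : ι → ℝ) : 0 ≤ enormI v :=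
  Real.sqrt_nonneg _

lemma dot_le_enormI {ι : Type*} [Fintype ι] (v w : ι → ℝ) :
    v ⬝ᵥ w ≤ enormI v * enormI w := by
  rw [enormI_eq_norm, enormI_eq_norm]
  have := real_inner_le_norm ((WithLp.equiv 2 (ι → ℝ)).symm v) ((WithLp.equiv 2 (ι → ℝ)).symm w)
  rw [EuclideanSpace.inner_eq_star_dotProduct] at this
  simpa [dotProduct, mul_comm] using this

lemma abs_dot_le_enormI {ι : Type*} [Fintype ι] (v w : ι → ℝ) :
    |v ⬝ᵥ w| ≤ enormI v * enormI w := by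
  rcases abs_cases (v ⬝ᵥ w) with ⟨h, _⟩ | ⟨h, _⟩
  · rw [h]; exact dot_le_enormI v w
  · rw [h]
    have := dot_le_enormI (-v) w
    simpa [neg_dotProduct, enormI, neg_pow] using this

lemma enormI_add_le {ι : Type*} [Fintype ι] (v w : ι → ℝ) :
    enormI (v + w) ≤ enormI v + enormI w := by
  rw [enormI_eq_norm, enormI_eq_norm, enormI_eq_norm]
  exact norm_add_le _ _

lemma enormI_neg {ι : Type*} [Fintype ι] (v : ι → ℝ) : enormI (-v) = enormI v := by
  simp [enormI, neg_pow]

lemma enormI_sq {ι : Type*} [Fintype ι] (v : ι → ℝ) : enormI v ^ 2 = v ⬝ᵥ v := by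
  rw [enormI, Real.sq_sqrt]
  · simp [dotProduct, sq]
  · positivity

lemma apply_le_enormI {ι : Type*} [Fintype ι] (v : ι → ℝ) (i : ι) : |v i| ≤ enormI v := by
  rw [enormI, ← Real.sqrt_sq_eq_abs]
  exact Real.sqrt_le_sqrt (Finset.single_le_sum (fun j _ => sq_nonneg (v j)) (Finset.mem_univ i))

lemma enormI_comp_inl {a b : ℕ} (r : (Fin a ⊕ Fin b) → ℝ) :
    enormI (fun i => r (Sum.inl i)) ≤ enormI r := by
  apply Real.sqrt_le_sqrt
  rw [Fintype.sum_sum_type]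
  exact le_add_of_nonneg_right (Finset.sum_nonneg fun j _ => sq_nonneg _)

lemma enormI_comp_inr {a b : ℕ} (r : (Fin a ⊕ Fin b) → ℝ) :
    enormI (fun j => r (Sum.inr j)) ≤ enormI r := by
  apply Real.sqrt_le_sqrt
  rw [Fintype.sum_sum_type]
  exact le_add_of_nonneg_left (Finset.sum_nonneg fun j _ => sq_nonneg _)

lemma enormI_mulVec_le {a b : ℕ} (B : Matrix (Fin a) (Fin b) ℝ) (C : ℝ) (hC : 0 ≤ C)
    (hB : ∀ i j, |B i j| ≤ C) (v : Fin b → ℝ) :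
    enormI (B.mulVec v) ≤ (a * b * C) * enormI v := by
  have hv := enormI_nonneg v
  have hentry : ∀ i, |B.mulVec v i| ≤ b * C * enormI v := by
    intro i
    calc |B.mulVec v i| = |∑ j, B i j * v j| := rfl
      _ ≤ ∑ j, |B i j * v j| := Finset.abs_sum_le_sum_abs _ _
      _ ≤ ∑ _j : Fin b, C * enormI v := by
          apply Finset.sum_le_sum
          intro j _
          rw [abs_mul]
          exact mul_le_mul (hB i j) (apply_le_enormI v j) (abs_nonneg _) hC
      _ = b * C * enormI v := by rw [Finset.sum_const]; simp [mul_assoc]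
  have h1 : enormI (B.mulVec v) ≤ Real.sqrt (a * (b * C * enormI v)^2) := by
    apply Real.sqrt_le_sqrt
    calc ∑ i, B.mulVec v i ^ 2 ≤ ∑ _i : Fin a, (b * C * enormI v)^2 := by
          apply Finset.sum_le_sum
          intro i _
          rw [← sq_abs]
          exact pow_le_pow_left₀ (abs_nonneg _) (hentry i) 2
      _ = a * (b * C * enormI v)^2 := by rw [Finset.sum_const]; simp
  refine h1.trans ?_
  rw [Real.sqrt_mul (by positivity), Real.sqrt_sq (by positivity)]
  have hsa : Real.sqrt a ≤ a := by
    rcases Nat.eq_zero_or_pos a with h | h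
    · simp [h]
    · have h1 : (1:ℝ) ≤ a := by exact_mod_cast h
      have := Real.sqrt_le_sqrt (show (a:ℝ) ≤ a * a by nlinarith)
      calc Real.sqrt a ≤ Real.sqrt (a * a) := this
        _ = a := Real.sqrt_mul_self (Nat.cast_nonneg a)
  calc Real.sqrt a * (b * C * enormI v) ≤ a * (b * C * enormI v) := by
        apply mul_le_mul_of_nonneg_right hsa (by positivity)
    _ = a * b * C * enormI v := by ring

lemma key_bound {n m : ℕ} (A : Matrix (Fin n) (Fin m) ℝ) (lam CB : ℝ)
    (hlam : 0 < lam) (hCB : 0 ≤ CB)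
    (hA : ∀ v : Fin m → ℝ, lam * Real.sqrt (v ⬝ᵥ v) ≤
      Real.sqrt (A.mulVec v ⬝ᵥ A.mulVec v))
    (hAb : ∀ u, enormI (Aᵀ.mulVec u) ≤ CB * enormI u)
    (hAb2 : ∀ v, enormI (A.mulVec v) ≤ CB * enormI v)
    (p : Fin n → ℝ) (q : Fin m → ℝ) (r₁ : Fin n → ℝ) (r₂ : Fin m → ℝ)
    (h1 : p + A.mulVec q = r₁) (h2 : Aᵀ.mulVec p = r₂)
    (δ : ℝ) (hδ1 : enormI r₁ ≤ δ) (hδ2 : enormI r₂ ≤ δ) :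
    enormI q ≤ (CB + 1) / lam ^ 2 * δ ∧
      enormI p ≤ (1 + CB * (CB + 1) / lam ^ 2) * δ := by
  have hδ : 0 ≤ δ := le_trans (enormI_nonneg r₁) hδ1
  -- squared smallest singular value inequality
  have hsq : lam ^ 2 * enormI q ^ 2 ≤ A.mulVec q ⬝ᵥ A.mulVec q := by
    have h := hA q
    have h0 : 0 ≤ lam * Real.sqrt (q ⬝ᵥ q) := by positivity
    have := mul_self_le_mul_self h0 h
    rw [Real.mul_self_sqrt (by rw [← enormI_sq]; positivity)] at this
    calc lam ^ 2 * enormI q ^ 2 = lam * Real.sqrt (q ⬝ᵥ q) * (lam * Real.sqrt (q ⬝ᵥ q)) := by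
          rw [show (q ⬝ᵥ q) = ∑ i, q i ^ 2 from by simp [dotProduct, sq], enormI]; ring
      _ ≤ _ := this
  -- A^T A q = A^T r₁ - r₂
  have hAAq : Aᵀ.mulVec (A.mulVec q) = Aᵀ.mulVec r₁ - r₂ := by
    have h3 : r₁ - p = A.mulVec q := by rw [← h1]; abel
    rw [← h2, ← Matrix.mulVec_sub, h3]
  have hdot : A.mulVec q ⬝ᵥ A.mulVec q = (Aᵀ.mulVec r₁ - r₂) ⬝ᵥ q := by
    rw [← hAAq, Matrix.dotProduct_mulVec, Matrix.mulVec_transpose]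
  have hrhs : (Aᵀ.mulVec r₁ - r₂) ⬝ᵥ q ≤ (CB + 1) * δ * enormI q := by
    calc (Aᵀ.mulVec r₁ - r₂) ⬝ᵥ q ≤ enormI (Aᵀ.mulVec r₁ - r₂) * enormI q :=
          dot_le_enormI _ _
      _ ≤ (CB * δ + δ) * enormI q := by
          apply mul_le_mul_of_nonneg_right _ (enormI_nonneg q)
          calc enormI (Aᵀ.mulVec r₁ - r₂) = enormI (Aᵀ.mulVec r₁ + -r₂) := by
                rw [sub_eq_add_neg]
            _ ≤ enormI (Aᵀ.mulVec r₁) + enormI (-r₂) := enormI_add_le _ _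
            _ ≤ CB * δ + δ := by
                rw [enormI_neg]
                exact add_le_add ((hAb r₁).trans (by
                  exact mul_le_mul_of_nonneg_left hδ1 hCB)) hδ2
      _ = (CB + 1) * δ * enormI q := by ring
  have hq : enormI q ≤ (CB + 1) / lam ^ 2 * δ := by
    have hmain : lam ^ 2 * enormI q ^ 2 ≤ (CB + 1) * δ * enormI q := by
      calc lam ^ 2 * enormI q ^ 2 ≤ A.mulVec q ⬝ᵥ A.mulVec q := hsq
        _ = _ := hdot
        _ ≤ _ := hrhs
    have ht := enormI_nonneg q
    rcases eq_or_lt_of_le ht with h0 | h0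
    · rw [← h0]; positivity
    · rw [div_mul_eq_mul_div, le_div_iff₀ (by positivity)]
      nlinarith
  refine ⟨hq, ?_⟩
  have hp : p = r₁ + -(A.mulVec q) := by rw [← h1]; abel
  calc enormI p = enormI (r₁ + -(A.mulVec q)) := by rw [← hp]
    _ ≤ enormI r₁ + enormI (-(A.mulVec q)) := enormI_add_le _ _
    _ = enormI r₁ + enormI (A.mulVec q) := by rw [enormI_neg]
    _ ≤ δ + CB * ((CB + 1) / lam ^ 2 * δ) := by
        refine add_le_add hδ1 ((hAb2 q).trans ?_)
        exact mul_le_mul_of_nonneg_left hq hCB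
    _ = (1 + CB * (CB + 1) / lam ^ 2) * δ := by ring

/-- first part of Proposition 7.1. On a compact set `S` where
`σ_min(A(x)) ≥ λ > 0`, let `K(x) = [[I, A(x)], [A(x)ᵀ, 0]]`, let `(g_σ(x), y_σ(x))` solve
`K(x)(g_σ, y_σ) = (g(x), σc(x))` exactly and `φ_σ(x) = f(x) − c(x)ᵀy_σ(x)`. Then there is
`M > 0` such that any inexact solution `(g̃, ỹ)` whose residual is at most
`min{1, ‖c(x)‖⁻¹}·min{η₁, η₃}` yields `|φ_σ(x) − φ̃| ≤ Mη₁` and `‖g_σ(x) − g̃‖ ≤ Mη₃`,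
where `φ̃ = f(x) − c(x)ᵀỹ`. -/
theorem inexact_penalty_evaluation_bounds
    {n m : ℕ}
    (S : Set (EuclideanSpace ℝ (Fin n))) (hS : IsCompact S)
    (f : EuclideanSpace ℝ (Fin n) → ℝ) (hf : ContDiff ℝ 1 f)
    (c : EuclideanSpace ℝ (Fin n) → EuclideanSpace ℝ (Fin m)) (hc : ContDiff ℝ 1 c)
    (A : EuclideanSpace ℝ (Fin n) → Matrix (Fin n) (Fin m) ℝ)
    (hA : ∀ x, ∀ i : Fin n, ∀ j : Fin m, A x i j = gradient (fun z => c z j) x i)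
    (lam : ℝ) (hlam : 0 < lam)
    (hsmin : ∀ x ∈ S, ∀ v : Fin m → ℝ,
      lam * Real.sqrt (v ⬝ᵥ v) ≤ Real.sqrt ((A x).mulVec v ⬝ᵥ (A x).mulVec v))
    (σ : ℝ)
    (K : EuclideanSpace ℝ (Fin n) → Matrix (Fin n ⊕ Fin m) (Fin n ⊕ Fin m) ℝ)
    (hK : ∀ x, K x = Matrix.fromBlocks 1 (A x) (A x)ᵀ 0)
    (gσ : EuclideanSpace ℝ (Fin n) → Fin n → ℝ)
    (yσ : EuclideanSpace ℝ (Fin n) → Fin m → ℝ)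
    (hexact : ∀ x ∈ S, (K x).mulVec (Sum.elim (gσ x) (yσ x)) =
      Sum.elim (fun i => gradient f x i) (fun j => σ * c x j))
    (φσ : EuclideanSpace ℝ (Fin n) → ℝ)
    (hφσ : ∀ x, φσ x = f x - (fun j => c x j) ⬝ᵥ yσ x) :
    ∃ M : ℝ, 0 < M ∧
      ∀ x ∈ S, ∀ η₁ η₃ : ℝ, 0 < η₁ → 0 < η₃ →
        ∀ (gt : Fin n → ℝ) (yt : Fin m → ℝ),
          enormI ((K x).mulVec (Sum.elim gt yt) -
              Sum.elim (fun i => gradient f x i) (fun j => σ * c x j)) ≤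
            (if ‖c x‖ = 0 then 1 else min 1 ‖c x‖⁻¹) * min η₁ η₃ →
          |φσ x - (f x - (fun j => c x j) ⬝ᵥ yt)| ≤ M * η₁ ∧
          enormI (gσ x - gt) ≤ M * η₃ := by
  classical
  -- continuity of entries of A
  have hAcont : ∀ (i : Fin n) (j : Fin m), Continuous fun x => A x i j := by
    intro i j
    have hcj : ContDiff ℝ 1 (fun z => c z j) := by
      have : ContDiff ℝ 1 fun z => (EuclideanSpace.proj j) (c z) :=
        (EuclideanSpace.proj (𝕜 := ℝ) j).contDiff.comp hc
      simpa using this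
    have hgrad : Continuous fun x => gradient (fun z => c z j) x := by
      have h1 : Continuous fun x => fderiv ℝ (fun z => c z j) x :=
        hcj.continuous_fderiv one_ne_zero
      exact (InnerProductSpace.toDual ℝ
        (EuclideanSpace ℝ (Fin n))).symm.continuous.comp h1
    have : Continuous fun x =>
        (EuclideanSpace.proj (𝕜 := ℝ) i) (gradient (fun z => c z j) x) :=
      (EuclideanSpace.proj (𝕜 := ℝ) i).continuous.comp hgrad
    have heq : (fun x => A x i j) = fun x =>
        (EuclideanSpace.proj (𝕜 := ℝ) i) (gradient (fun z => c z j) x) :=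
      funext fun x => hA x i j
    rw [heq]; exact this
  -- uniform bound on entries of A on S
  obtain ⟨C₀, hC₀⟩ : ∃ C₀, ∀ x ∈ S, ∀ i j, |A x i j| ≤ C₀ := by
    have hF : Continuous fun x => (fun p : Fin n × Fin m => A x p.1 p.2) :=
      continuous_pi fun p => hAcont p.1 p.2
    obtain ⟨C₀, hC₀⟩ := hS.exists_bound_of_continuousOn hF.continuousOn
    refine ⟨C₀, fun x hx i j => ?_⟩
    have := norm_le_pi_norm (fun p : Fin n × Fin m => A x p.1 p.2) (i, j)
    simp only [Real.norm_eq_abs] at this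
    exact this.trans (hC₀ x hx)
  set CA : ℝ := max C₀ 0 with hCA
  have hCAnn : 0 ≤ CA := le_max_right _ _
  set CB : ℝ := n * m * CA with hCB
  have hCBnn : 0 ≤ CB := by positivity
  set M₁ : ℝ := (CB + 1) / lam ^ 2 with hM₁
  set M₂ : ℝ := 1 + CB * (CB + 1) / lam ^ 2 with hM₂
  have hM₁nn : 0 ≤ M₁ := by positivity
  have hM₂nn : 0 ≤ M₂ := by positivity
  refine ⟨max M₁ M₂ + 1, by positivity, ?_⟩
  intro x hx η₁ η₃ hη₁ hη₃ gt yt hres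
  set δ : ℝ := (if ‖c x‖ = 0 then 1 else min 1 ‖c x‖⁻¹) * min η₁ η₃ with hδdef
  have hmin : 0 < min η₁ η₃ := lt_min hη₁ hη₃
  have hfac1 : (if ‖c x‖ = 0 then 1 else min 1 ‖c x‖⁻¹) ≤ 1 := by
    split
    · exact le_refl 1
    · exact min_le_left _ _
  have hδle : δ ≤ min η₁ η₃ := by
    rw [hδdef]
    calc _ ≤ 1 * min η₁ η₃ := mul_le_mul_of_nonneg_right hfac1 hmin.le
      _ = min η₁ η₃ := one_mul _
  have hcδ : ‖c x‖ * δ ≤ min η₁ η₃ := by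
    rw [hδdef]
    by_cases h : ‖c x‖ = 0
    · simp [h, hmin.le]
    · rw [if_neg h, ← mul_assoc]
      calc ‖c x‖ * min 1 ‖c x‖⁻¹ * min η₁ η₃
          ≤ ‖c x‖ * ‖c x‖⁻¹ * min η₁ η₃ := by
            apply mul_le_mul_of_nonneg_right _ hmin.le
            exact mul_le_mul_of_nonneg_left (min_le_right _ _) (norm_nonneg _)
        _ = min η₁ η₃ := by rw [mul_inv_cancel₀ h, one_mul]
  -- the residual and error decomposition
  set p : Fin n → ℝ := gt - gσ x with hp
  set q : Fin m → ℝ := yt - yσ x with hq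
  set r : (Fin n ⊕ Fin m) → ℝ := (K x).mulVec (Sum.elim gt yt) -
      Sum.elim (fun i => gradient f x i) (fun j => σ * c x j) with hr
  have helim : Sum.elim gt yt - Sum.elim (gσ x) (yσ x) = Sum.elim p q := by
    funext s; cases s <;> simp [hp, hq]
  have hKr : (K x).mulVec (Sum.elim p q) = r := by
    rw [← helim, Matrix.mulVec_sub, hr, hexact x hx]
  have hblocks : Sum.elim (p + (A x).mulVec q) ((A x)ᵀ.mulVec p) = r := by
    rw [← hKr, hK, Matrix.fromBlocks_mulVec]
    simp [Matrix.one_mulVec, Matrix.zero_mulVec]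
  have h1 : p + (A x).mulVec q = fun i => r (Sum.inl i) := by
    funext i; exact (congrFun hblocks (Sum.inl i)).symm ▸ rfl
  have h2 : (A x)ᵀ.mulVec p = fun j => r (Sum.inr j) := by
    funext j; exact (congrFun hblocks (Sum.inr j)).symm ▸ rfl
  have hδ1 : enormI (fun i => r (Sum.inl i)) ≤ δ := (enormI_comp_inl r).trans hres
  have hδ2 : enormI (fun j => r (Sum.inr j)) ≤ δ := (enormI_comp_inr r).trans hres
  have hAb : ∀ u, enormI ((A x)ᵀ.mulVec u) ≤ CB * enormI u := by
    intro u
    have := enormI_mulVec_le (A x)ᵀ CA hCAnn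
      (fun i j => le_trans (hC₀ x hx j i) (le_max_left _ _)) u
    calc enormI ((A x)ᵀ.mulVec u) ≤ (m * n * CA) * enormI u := this
      _ = CB * enormI u := by rw [hCB]; ring
  have hAb2 : ∀ v, enormI ((A x).mulVec v) ≤ CB * enormI v := by
    intro v
    exact enormI_mulVec_le (A x) CA hCAnn
      (fun i j => le_trans (hC₀ x hx i j) (le_max_left _ _)) v
  obtain ⟨hqb, hpb⟩ := key_bound (A x) lam CB hlam hCBnn (hsmin x hx) hAb hAb2
    p q _ _ h1 h2 δ hδ1 hδ2
  constructor
  · -- |φσ x - φ̃| ≤ M η₁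
    have hdiff : φσ x - (f x - (fun j => c x j) ⬝ᵥ yt) = (fun j => c x j) ⬝ᵥ q := by
      rw [hφσ, hq, dotProduct_sub]; ring
    have hcnorm : enormI (fun j => c x j) = ‖c x‖ := by
      rw [enormI, EuclideanSpace.norm_eq]
      congr 1
      exact Finset.sum_congr rfl fun j _ => by rw [Real.norm_eq_abs, sq_abs]
    rw [hdiff]
    calc |(fun j => c x j) ⬝ᵥ q| ≤ enormI (fun j => c x j) * enormI q :=
          abs_dot_le_enormI _ _
      _ ≤ ‖c x‖ * (M₁ * δ) := by
          rw [hcnorm]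
          exact mul_le_mul_of_nonneg_left hqb (norm_nonneg _)
      _ = M₁ * (‖c x‖ * δ) := by ring
      _ ≤ M₁ * η₁ := by
          apply mul_le_mul_of_nonneg_left _ hM₁nn
          exact hcδ.trans (min_le_left _ _)
      _ ≤ (max M₁ M₂ + 1) * η₁ := by
          apply mul_le_mul_of_nonneg_right _ hη₁.le
          linarith [le_max_left M₁ M₂]
  · -- ‖gσ x - gt‖ ≤ M η₃
    have : gσ x - gt = -p := by rw [hp]; abel
    rw [this, enormI_neg]
    calc enormI p ≤ M₂ * δ := hpb
      _ ≤ M₂ * η₃ := mul_le_mul_of_nonneg_left (hδle.trans (min_le_right _ _)) hM₂nn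
      _ ≤ (max M₁ M₂ + 1) * η₃ := by
          apply mul_le_mul_of_nonneg_right _ hη₃.le
          linarith [le_max_right M₁ M₂]
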